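/- Let f be a bounded probability density on ℝ^D and define RDAD(x; f, m) = sqrt((1/m) ∫₀^m F_x^{−1}(q)² dq), where F_x(r) = P(f(X)^{1/D} d(X,x) ≤ r). Then RDAD(·; f, m) is Lipschitz with constant ‖f‖_∞^{1/D}. -/
import Mathlib


open MeasureTheory Set

/-- The measure induced by the density `f`. -/
noncomputable def densMeasure {D : ℕ} (f : EuclideanSpace ℝ (Fin D) → ℝ) :
    Measure (EuclideanSpace ℝ (Fin D)) :=
  volume.withDensity fun ξ => ENNReal.ofReal (f ξ)

/-- `F_x(r) = P(f(X)^{1/D} d(X,x) ≤ r)`. -/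
noncomputable def Fcdf {D : ℕ} (f : EuclideanSpace ℝ (Fin D) → ℝ)
    (x : EuclideanSpace ℝ (Fin D)) (r : ℝ) : ℝ :=
  (densMeasure f {ξ | f ξ ^ ((1 : ℝ) / D) * dist ξ x ≤ r}).toReal

/-- Generalized inverse `F_x^{-1}(q) = inf {t : F_x(t) ≥ q}`. -/
noncomputable def Fquantile {D : ℕ} (f : EuclideanSpace ℝ (Fin D) → ℝ)
    (x : EuclideanSpace ℝ (Fin D)) (q : ℝ) : ℝ :=
  sInf {t : ℝ | q ≤ Fcdf f x t}

/-- `RDAD(x; f, m) = sqrt((1/m) ∫₀^m F_x^{-1}(q)² dq)`. -/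
noncomputable def RDAD {D : ℕ} (f : EuclideanSpace ℝ (Fin D) → ℝ)
    (x : EuclideanSpace ℝ (Fin D)) (m : ℝ) : ℝ :=
  Real.sqrt ((1 / m) * ∫ q in (0 : ℝ)..m, (Fquantile f x q) ^ 2)

section Aux

variable {D : ℕ} {f : EuclideanSpace ℝ (Fin D) → ℝ}

lemma Fcdf_eq_zero_of_neg (hf0 : ∀ ξ, 0 ≤ f ξ) (x : EuclideanSpace ℝ (Fin D)) {t : ℝ}
    (ht : t < 0) : Fcdf f x t = 0 := by
  have hset : {ξ : EuclideanSpace ℝ (Fin D) | f ξ ^ ((1 : ℝ) / D) * dist ξ x ≤ t} = ∅ := by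
    ext ξ
    simp only [mem_setOf_eq, mem_empty_iff_false, iff_false, not_le]
    exact lt_of_lt_of_le ht (mul_nonneg (Real.rpow_nonneg (hf0 ξ) _) dist_nonneg)
  unfold Fcdf
  rw [hset]
  simp

lemma Fquantile_set_bddBelow (hf0 : ∀ ξ, 0 ≤ f ξ) (x : EuclideanSpace ℝ (Fin D)) {q : ℝ}
    (hq : 0 < q) : BddBelow {t : ℝ | q ≤ Fcdf f x t} := by
  refine ⟨0, fun t ht => ?_⟩
  by_contra h
  push_neg at h
  rw [mem_setOf_eq, Fcdf_eq_zero_of_neg hf0 x h] at ht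
  exact absurd ht (not_le.2 hq)

lemma Fquantile_nonneg (hf0 : ∀ ξ, 0 ≤ f ξ) (x : EuclideanSpace ℝ (Fin D)) {q : ℝ}
    (hq : 0 ≤ q) : 0 ≤ Fquantile f x q := by
  rcases eq_or_lt_of_le hq with h | h
  · have hset : {t : ℝ | q ≤ Fcdf f x t} = univ := by
      ext t; simp only [mem_setOf_eq, mem_univ, iff_true]
      rw [← h]; exact ENNReal.toReal_nonneg
    rw [Fquantile, hset, Real.sInf_of_not_bddBelow not_bddBelow_univ]
  · exact Real.sInf_nonneg fun t ht => by
      by_contra hlt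
      push_neg at hlt
      rw [mem_setOf_eq, Fcdf_eq_zero_of_neg hf0 x hlt] at ht
      exact absurd ht (not_le.2 h)

lemma Fquantile_set_nonempty (hprob : IsProbabilityMeasure (densMeasure f))
    (x : EuclideanSpace ℝ (Fin D)) {q : ℝ} (hq : q < 1) :
    {t : ℝ | q ≤ Fcdf f x t}.Nonempty := by
  haveI := hprob
  set A : ℕ → Set (EuclideanSpace ℝ (Fin D)) :=
    fun n => {ξ | f ξ ^ ((1 : ℝ) / D) * dist ξ x ≤ n} with hA
  have hmono : Monotone A := by
    intro n k hnk ξ hξ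
    simp only [hA, mem_setOf_eq] at hξ ⊢
    exact le_trans hξ (Nat.cast_le.2 hnk)
  have hU : ⋃ n, A n = univ := by
    ext ξ
    simp only [hA, mem_iUnion, mem_setOf_eq, mem_univ, iff_true]
    exact exists_nat_ge _
  have h1 := tendsto_measure_iUnion_atTop (μ := densMeasure f) hmono
  rw [hU, measure_univ] at h1
  have hq' : ENNReal.ofReal q < 1 := by
    rcases le_or_gt q 0 with h | h
    · simpa [ENNReal.ofReal_eq_zero.2 h] using ENNReal.zero_lt_one
    · rwa [← ENNReal.ofReal_one, ENNReal.ofReal_lt_ofReal_iff one_pos]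
  have h2 : ∀ᶠ n in Filter.atTop, ENNReal.ofReal q < densMeasure f (A n) :=
    h1.eventually_const_lt hq'
  obtain ⟨n, hn⟩ := h2.exists
  refine ⟨n, ?_⟩
  rcases le_or_gt q 0 with h | h
  · exact h.trans ENNReal.toReal_nonneg
  · have := ENNReal.toReal_strict_mono (measure_ne_top _ _) hn
    rw [ENNReal.toReal_ofReal h.le] at this
    exact this.le

lemma Fquantile_monotoneOn (hf0 : ∀ ξ, 0 ≤ f ξ)
    (hprob : IsProbabilityMeasure (densMeasure f)) (x : EuclideanSpace ℝ (Fin D)) {m : ℝ}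
    (hm : m ∈ Set.Ioo (0 : ℝ) 1) : MonotoneOn (Fquantile f x) (Icc 0 m) := by
  intro q hq q' hq' hqq'
  rcases eq_or_lt_of_le hq.1 with h0 | h0
  · have : (0:ℝ) = Fquantile f x q := by
      rw [← h0]
      have hset : {t : ℝ | (0:ℝ) ≤ Fcdf f x t} = univ := by
        ext t; simp only [mem_setOf_eq, mem_univ, iff_true]; exact ENNReal.toReal_nonneg
      rw [Fquantile, hset, Real.sInf_of_not_bddBelow not_bddBelow_univ]
    rw [← this]
    exact Fquantile_nonneg hf0 x hq'.1
  · refine csInf_le_csInf (Fquantile_set_bddBelow hf0 x h0)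
      (Fquantile_set_nonempty hprob x (lt_of_le_of_lt hq'.2 hm.2)) ?_
    exact fun t ht => le_trans hqq' ht

lemma Fquantile_le_add (hf0 : ∀ ξ, 0 ≤ f ξ) (hbdd : BddAbove (Set.range f))
    (hprob : IsProbabilityMeasure (densMeasure f)) (x y : EuclideanSpace ℝ (Fin D)) {q : ℝ}
    (hq0 : 0 < q) (hq1 : q < 1) :
    Fquantile f x q ≤ Fquantile f y q + sSup (Set.range f) ^ ((1 : ℝ) / D) * dist x y := by
  haveI := hprob
  set c := sSup (Set.range f) ^ ((1 : ℝ) / D) * dist x y with hc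
  have hsub : ∀ t : ℝ, {ξ : EuclideanSpace ℝ (Fin D) | f ξ ^ ((1 : ℝ) / D) * dist ξ y ≤ t} ⊆
      {ξ | f ξ ^ ((1 : ℝ) / D) * dist ξ x ≤ t + c} := by
    intro t ξ hξ
    have h1 : dist ξ x ≤ dist ξ y + dist y x := dist_triangle _ _ _
    have h2 : f ξ ^ ((1 : ℝ) / D) * dist ξ x ≤
        f ξ ^ ((1 : ℝ) / D) * dist ξ y + f ξ ^ ((1 : ℝ) / D) * dist y x := by
      rw [← mul_add]
      exact mul_le_mul_of_nonneg_left h1 (Real.rpow_nonneg (hf0 ξ) _)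
    have h3 : f ξ ^ ((1 : ℝ) / D) * dist y x ≤ c := by
      rw [hc, dist_comm y x]
      refine mul_le_mul_of_nonneg_right ?_ dist_nonneg
      exact Real.rpow_le_rpow (hf0 ξ) (le_csSup hbdd ⟨ξ, rfl⟩) (by positivity)
    exact h2.trans (add_le_add hξ h3)
  have hF : ∀ t : ℝ, Fcdf f y t ≤ Fcdf f x (t + c) := fun t =>
    ENNReal.toReal_mono (measure_ne_top _ _) (measure_mono (hsub t))
  have hne := Fquantile_set_nonempty hprob y hq1
  have hkey : ∀ t ∈ {t : ℝ | q ≤ Fcdf f y t}, sInf {t : ℝ | q ≤ Fcdf f x t} - c ≤ t := by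
    intro t ht
    have hmem : t + c ∈ {t : ℝ | q ≤ Fcdf f x t} := le_trans ht (hF t)
    have h := csInf_le (Fquantile_set_bddBelow hf0 x hq0) hmem
    linarith
  have := le_csInf hne hkey
  show sInf {t : ℝ | q ≤ Fcdf f x t} ≤ sInf {t : ℝ | q ≤ Fcdf f y t} + c
  linarith

lemma RDAD_le_add {f : EuclideanSpace ℝ (Fin D) → ℝ} (hf0 : ∀ ξ, 0 ≤ f ξ)
    (hbdd : BddAbove (Set.range f)) (hprob : IsProbabilityMeasure (densMeasure f))
    {m : ℝ} (hm : m ∈ Set.Ioo (0 : ℝ) 1) (x y : EuclideanSpace ℝ (Fin D)) :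
    RDAD f x m ≤ RDAD f y m + sSup (Set.range f) ^ ((1 : ℝ) / D) * dist x y := by
  haveI := hprob
  set c := sSup (Set.range f) ^ ((1 : ℝ) / D) * dist x y with hc
  have hc0 : 0 ≤ c := by
    rw [hc]
    refine mul_nonneg (Real.rpow_nonneg ?_ _) dist_nonneg
    exact le_trans (hf0 0) (le_csSup hbdd ⟨0, rfl⟩)
  set gx := Fquantile f x with hgx
  set gy := Fquantile f y with hgy
  have hm0 : (0:ℝ) ≤ m := hm.1.le
  have huIcc : uIcc (0:ℝ) m = Icc 0 m := uIcc_of_le hm0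
  have hmx : MonotoneOn gx (Icc 0 m) := Fquantile_monotoneOn hf0 hprob x hm
  have hmy : MonotoneOn gy (Icc 0 m) := Fquantile_monotoneOn hf0 hprob y hm
  have hgx0 : ∀ q ∈ Icc (0:ℝ) m, 0 ≤ gx q := fun q hq => Fquantile_nonneg hf0 x hq.1
  have hgy0 : ∀ q ∈ Icc (0:ℝ) m, 0 ≤ gy q := fun q hq => Fquantile_nonneg hf0 y hq.1
  have hsq : ∀ (g : ℝ → ℝ), MonotoneOn g (Icc 0 m) → (∀ q ∈ Icc (0:ℝ) m, 0 ≤ g q) →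
      MonotoneOn (fun q => g q ^ 2) (Icc 0 m) := by
    intro g hg hg0 a ha b hb hab
    exact pow_le_pow_left₀ (hg0 a ha) (hg ha hb hab) 2
  have int_gx2 : IntervalIntegrable (fun q => gx q ^ 2) volume 0 m :=
    MonotoneOn.intervalIntegrable (huIcc ▸ hsq gx hmx hgx0)
  have int_gy : IntervalIntegrable gy volume 0 m :=
    MonotoneOn.intervalIntegrable (huIcc ▸ hmy)
  have int_gy2 : IntervalIntegrable (fun q => gy q ^ 2) volume 0 m :=
    MonotoneOn.intervalIntegrable (huIcc ▸ hsq gy hmy hgy0)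
  set I1 : ℝ := ∫ q in (0:ℝ)..m, gy q with hI1def
  set I2x : ℝ := ∫ q in (0:ℝ)..m, gx q ^ 2 with hI2xdef
  set I2y : ℝ := ∫ q in (0:ℝ)..m, gy q ^ 2 with hI2ydef
  have hI1 : 0 ≤ I1 := intervalIntegral.integral_nonneg hm0 fun q hq => hgy0 q hq
  have hI2y : 0 ≤ I2y := intervalIntegral.integral_nonneg hm0 fun q hq =>
    sq_nonneg _
  -- pointwise comparison
  have hpw : ∀ q ∈ Icc (0:ℝ) m, gx q ^ 2 ≤ (gy q + c) ^ 2 := by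
    intro q hq
    rcases eq_or_lt_of_le hq.1 with h0 | h0
    · have hx0 : gx q = 0 := by
        rw [hgx, ← h0]
        have hset : {t : ℝ | (0:ℝ) ≤ Fcdf f x t} = univ := by
          ext t; simp only [mem_setOf_eq, mem_univ, iff_true]; exact ENNReal.toReal_nonneg
        rw [Fquantile, hset, Real.sInf_of_not_bddBelow not_bddBelow_univ]
      rw [hx0]
      have : (0:ℝ) ≤ gy q + c := add_nonneg (hgy0 q hq) hc0
      nlinarith
    · have hle : gx q ≤ gy q + c :=
        Fquantile_le_add hf0 hbdd hprob x y h0 (lt_of_le_of_lt hq.2 hm.2)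
      exact pow_le_pow_left₀ (hgx0 q hq) hle 2
  have int_gyc2 : IntervalIntegrable (fun q => (gy q + c) ^ 2) volume 0 m := by
    refine MonotoneOn.intervalIntegrable (huIcc ▸ ?_)
    intro a ha b hb hab
    have h1 : gy a + c ≤ gy b + c := by linarith [hmy ha hb hab]
    exact pow_le_pow_left₀ (add_nonneg (hgy0 a ha) hc0) h1 2
  have hA : I2x ≤ ∫ q in (0:ℝ)..m, (gy q + c) ^ 2 :=
    intervalIntegral.integral_mono_on hm0 int_gx2 int_gyc2 hpw
  have hexp : (∫ q in (0:ℝ)..m, (gy q + c) ^ 2) = I2y + 2 * c * I1 + c ^ 2 * m := by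
    have heq : EqOn (fun q => (gy q + c) ^ 2)
        (fun q => gy q ^ 2 + (2 * c) * gy q + c ^ 2) (uIcc 0 m) := by
      intro q _; ring
    rw [intervalIntegral.integral_congr heq,
      intervalIntegral.integral_add (int_gy2.add (int_gy.const_mul (2 * c)))
        intervalIntegrable_const,
      intervalIntegral.integral_add int_gy2 (int_gy.const_mul (2 * c)),
      intervalIntegral.integral_const_mul, intervalIntegral.integral_const]
    simp only [smul_eq_mul, sub_zero]
    ring
  -- Cauchy–Schwarz via discriminant trick
  have hCS : I1 ^ 2 ≤ m * I2y := by
    have h0 : 0 ≤ ∫ q in (0:ℝ)..m, (m * gy q - I1) ^ 2 :=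
      intervalIntegral.integral_nonneg hm0 fun q _ => sq_nonneg _
    have heq : EqOn (fun q => (m * gy q - I1) ^ 2)
        (fun q => m ^ 2 * gy q ^ 2 - (2 * m * I1) * gy q + I1 ^ 2) (uIcc 0 m) := by
      intro q _; ring
    rw [intervalIntegral.integral_congr heq,
      intervalIntegral.integral_add ((int_gy2.const_mul (m ^ 2)).sub
        (int_gy.const_mul (2 * m * I1))) intervalIntegrable_const,
      intervalIntegral.integral_sub (int_gy2.const_mul (m ^ 2))
        (int_gy.const_mul (2 * m * I1)),
      intervalIntegral.integral_const_mul, intervalIntegral.integral_const_mul,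
      intervalIntegral.integral_const] at h0
    simp only [smul_eq_mul, sub_zero] at h0
    have hmpos := hm.1
    have h1 : m * I1 ^ 2 ≤ m * (m * I2y) := by nlinarith [h0]
    exact le_of_mul_le_mul_left h1 hmpos
  have hI1le : I1 ≤ Real.sqrt m * Real.sqrt I2y := by
    rw [← Real.sqrt_mul hm0]
    exact Real.le_sqrt_of_sq_le hCS
  have hB : I2x ≤ (Real.sqrt I2y + c * Real.sqrt m) ^ 2 := by
    have hs1 : Real.sqrt I2y ^ 2 = I2y := Real.sq_sqrt hI2y
    have hs2 : Real.sqrt m ^ 2 = m := Real.sq_sqrt hm0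
    calc I2x ≤ I2y + 2 * c * I1 + c ^ 2 * m := hexp ▸ hA
      _ ≤ (Real.sqrt I2y + c * Real.sqrt m) ^ 2 := by nlinarith [hI1le, hc0]
  -- conclude
  have hRx : RDAD f x m ≤ Real.sqrt (1 / m) * (Real.sqrt I2y + c * Real.sqrt m) := by
    rw [RDAD]
    have h1 : (1 / m) * I2x ≤ (1 / m) * (Real.sqrt I2y + c * Real.sqrt m) ^ 2 :=
      mul_le_mul_of_nonneg_left hB (by positivity)
    calc Real.sqrt ((1 / m) * I2x) ≤
        Real.sqrt ((1 / m) * (Real.sqrt I2y + c * Real.sqrt m) ^ 2) := Real.sqrt_le_sqrt h1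
      _ = Real.sqrt (1 / m) * (Real.sqrt I2y + c * Real.sqrt m) := by
          rw [Real.sqrt_mul (by positivity), Real.sqrt_sq (by positivity)]
  have hRy : Real.sqrt (1 / m) * Real.sqrt I2y = RDAD f y m := by
    rw [RDAD, ← Real.sqrt_mul (by positivity)]
  have hone : Real.sqrt (1 / m) * Real.sqrt m = 1 := by
    rw [← Real.sqrt_mul (by positivity)]
    rw [one_div_mul_cancel (ne_of_gt hm.1), Real.sqrt_one]
  calc RDAD f x m ≤ Real.sqrt (1 / m) * (Real.sqrt I2y + c * Real.sqrt m) := hRx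
    _ = Real.sqrt (1 / m) * Real.sqrt I2y + c * (Real.sqrt (1 / m) * Real.sqrt m) := by ring
    _ = RDAD f y m + c := by rw [hRy, hone, mul_one]

end Aux

/-- For a bounded density `f`, `RDAD(·; f, m)` is Lipschitz with constant `‖f‖_∞^{1/D}`. -/
theorem RDAD_lipschitz_bounded {D : ℕ} (hD : 0 < D)
    (f : EuclideanSpace ℝ (Fin D) → ℝ) (hf : Measurable f) (hf0 : ∀ ξ, 0 ≤ f ξ)
    (hbdd : BddAbove (Set.range f))
    (hprob : IsProbabilityMeasure (densMeasure f))
    (m : ℝ) (hm : m ∈ Set.Ioo (0 : ℝ) 1) :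
    ∀ x y : EuclideanSpace ℝ (Fin D),
      |RDAD f x m - RDAD f y m| ≤ (sSup (Set.range f)) ^ ((1 : ℝ) / D) * dist x y := by
  intro x y
  have h1 := RDAD_le_add hf0 hbdd hprob hm x y
  have h2 := RDAD_le_add hf0 hbdd hprob hm y x
  rw [dist_comm y x] at h2
  rw [abs_sub_le_iff]
  constructor <;> linarith
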